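/- Let A be an element of a unital C*-algebra 𝔄 and λ ∈ ℂ. There exists a state ω on 𝔄 that is an eigenstate of A with eigenvalue λ if and only if A − λ·1 is not left-invertible in 𝔄, i.e., there exists no B ∈ 𝔄 with B(A − λ·1) = 1. -/

import Mathlib

variable {𝔄 : Type*} [CStarAlgebra 𝔄]

/-- For a norm-one unital functional, values at selfadjoint elements are real. -/
lemma aux_im_eq_zero [Nontrivial 𝔄] (g : 𝔄 →L[ℂ] ℂ) (hg : ‖g‖ ≤ 1) (hg1 : g 1 = 1) {h : 𝔄}
    (hh : IsSelfAdjoint h) : (g h).im = 0 := by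
  have key : ∀ t : ℝ, (g h).re ^ 2 + ((g h).im + t) ^ 2 ≤ ‖h‖ ^ 2 + t ^ 2 := by
    intro t
    obtain ⟨c, hc⟩ : ∃ c : ℂ, c = (t : ℂ) * Complex.I := ⟨_, rfl⟩
    have hstar : star (h + c • (1 : 𝔄)) = h - c • 1 := by
      simp [star_smul, hh.star_eq, hc, Complex.star_def, map_mul, Complex.conj_ofReal,
        Complex.conj_I, sub_eq_add_neg]
    have hcc : c * c = -((t : ℂ) ^ 2) := by
      have : c * c = (t : ℂ) ^ 2 * (Complex.I * Complex.I) := by rw [hc]; ring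
      rw [this, Complex.I_mul_I]; ring
    have hmul : star (h + c • (1 : 𝔄)) * (h + c • (1 : 𝔄)) = h * h + ((t : ℂ) ^ 2) • 1 := by
      rw [hstar]
      have expand : (h - c • (1 : 𝔄)) * (h + c • 1) = h * h - (c * c) • 1 := by
        rw [Algebra.smul_def c, Algebra.smul_def (c * c), map_mul, mul_one, sub_mul,
          mul_add, mul_add, ← Algebra.commutes c h, mul_one]
        abel
      rw [expand, hcc, neg_smul, sub_neg_eq_add]
    have h2 : ‖h + c • (1 : 𝔄)‖ ^ 2 ≤ ‖h‖ ^ 2 + t ^ 2 := by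
      have hC : ‖h + c • (1 : 𝔄)‖ ^ 2 = ‖star (h + c • (1 : 𝔄)) * (h + c • (1 : 𝔄))‖ := by
        rw [CStarRing.norm_star_mul_self, sq]
      rw [hC, hmul]
      have h3 : ‖h * h‖ = ‖h‖ ^ 2 := by
        calc ‖h * h‖ = ‖star h * h‖ := by rw [hh.star_eq]
          _ = ‖h‖ ^ 2 := by rw [CStarRing.norm_star_mul_self, sq]
      have h4 : ‖((t : ℂ) ^ 2) • (1 : 𝔄)‖ = t ^ 2 := by
        rw [norm_smul, norm_one, mul_one]
        simp [← Complex.ofReal_pow, sq_nonneg]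
      calc ‖h * h + ((t : ℂ) ^ 2) • (1 : 𝔄)‖ ≤ ‖h * h‖ + ‖((t : ℂ) ^ 2) • (1 : 𝔄)‖ :=
            norm_add_le _ _
        _ = ‖h‖ ^ 2 + t ^ 2 := by rw [h3, h4]
    have h1 : ‖g (h + c • (1 : 𝔄))‖ ≤ ‖h + c • (1 : 𝔄)‖ := by
      calc ‖g (h + c • (1 : 𝔄))‖ ≤ ‖g‖ * ‖h + c • (1 : 𝔄)‖ := g.le_opNorm _
        _ ≤ 1 * ‖h + c • (1 : 𝔄)‖ := mul_le_mul_of_nonneg_right hg (norm_nonneg _)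
        _ = _ := one_mul _
    have hval : g (h + c • (1 : 𝔄)) = g h + c := by
      rw [map_add, map_smul, hg1, smul_eq_mul, mul_one]
    have h5 : ‖g h + c‖ ^ 2 = (g h).re ^ 2 + ((g h).im + t) ^ 2 := by
      rw [Complex.sq_norm, Complex.normSq_apply]
      simp [hc]
      ring
    calc (g h).re ^ 2 + ((g h).im + t) ^ 2 = ‖g h + c‖ ^ 2 := h5.symm
      _ = ‖g (h + c • (1 : 𝔄))‖ ^ 2 := by rw [hval]
      _ ≤ ‖h + c • (1 : 𝔄)‖ ^ 2 := by gcongr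
      _ ≤ ‖h‖ ^ 2 + t ^ 2 := h2
  by_contra him
  have hk := key ((‖h‖ ^ 2 + 1) / (2 * (g h).im))
  have h2 : 2 * (g h).im * ((‖h‖ ^ 2 + 1) / (2 * (g h).im)) = ‖h‖ ^ 2 + 1 := by
    field_simp
  nlinarith [sq_nonneg ((g h).re), sq_nonneg ((g h).im)]

lemma aux_param (z w : ℂ) (hz : ∀ t : ℝ, ∃ r : ℝ, 0 ≤ r ∧ z + t * w = r) : w = 0 := by
  have him : ∀ t : ℝ, z.im + t * w.im = 0 := by
    intro t
    obtain ⟨r, _, hr⟩ := hz t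
    have := congrArg Complex.im hr
    simpa using this
  have hwim : w.im = 0 := by
    have h0 := him 0
    have h1 := him 1
    simp at h0
    rw [h0] at h1
    simpa using h1
  have hre : ∀ t : ℝ, 0 ≤ z.re + t * w.re := by
    intro t
    obtain ⟨r, hr0, hr⟩ := hz t
    have := congrArg Complex.re hr
    simp at this
    rw [this]
    exact hr0
  have hwre : w.re = 0 := by
    by_contra hw
    have h := hre (-(z.re + 1) / w.re)
    rw [div_mul_cancel₀ _ hw] at h
    linarith
  exact Complex.ext hwre hwim

lemma aux_norm_sub (x : 𝔄) :
    ‖algebraMap ℝ 𝔄 ‖star x * x‖ - star x * x‖ ≤ ‖star x * x‖ := by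
  letI := CStarAlgebra.spectralOrder 𝔄
  haveI := CStarAlgebra.spectralOrderedRing 𝔄
  have hp0 : (0 : 𝔄) ≤ star x * x := star_mul_self_nonneg x
  have hpsa : IsSelfAdjoint (star x * x) := IsSelfAdjoint.star_mul_self x
  have h1 : star x * x ≤ algebraMap ℝ 𝔄 ‖star x * x‖ := hpsa.le_algebraMap_norm_self
  have hb : (0 : 𝔄) ≤ algebraMap ℝ 𝔄 ‖star x * x‖ - star x * x := sub_nonneg.mpr h1
  rw [CStarAlgebra.norm_le_iff_le_algebraMap _ (norm_nonneg _) hb]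
  exact sub_le_self _ hp0

lemma aux_pos [Nontrivial 𝔄] (g : 𝔄 →L[ℂ] ℂ) (hg : ‖g‖ ≤ 1) (hg1 : g 1 = 1) (x : 𝔄) :
    ∃ r : ℝ, 0 ≤ r ∧ g (star x * x) = (r : ℂ) := by
  have hpsa : IsSelfAdjoint (star x * x) := IsSelfAdjoint.star_mul_self x
  have him := aux_im_eq_zero g hg hg1 hpsa
  refine ⟨(g (star x * x)).re, ?_, (Complex.ext (by simp) (by simp [him])).symm⟩
  have hb1 : ‖g (algebraMap ℝ 𝔄 ‖star x * x‖ - star x * x)‖ ≤ ‖star x * x‖ := by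
    calc ‖g (algebraMap ℝ 𝔄 ‖star x * x‖ - star x * x)‖
        ≤ ‖g‖ * ‖algebraMap ℝ 𝔄 ‖star x * x‖ - star x * x‖ := g.le_opNorm _
      _ ≤ 1 * ‖algebraMap ℝ 𝔄 ‖star x * x‖ - star x * x‖ :=
          mul_le_mul_of_nonneg_right hg (norm_nonneg _)
      _ = ‖algebraMap ℝ 𝔄 ‖star x * x‖ - star x * x‖ := one_mul _
      _ ≤ ‖star x * x‖ := aux_norm_sub x
  have hval : g (algebraMap ℝ 𝔄 ‖star x * x‖ - star x * x)
      = (‖star x * x‖ : ℂ) - g (star x * x) := by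
    rw [map_sub]
    congr 1
    rw [Algebra.algebraMap_eq_smul_one, g.map_smul_of_tower, hg1]
    simp [Complex.real_smul]
  rw [hval] at hb1
  have habs : |‖star x * x‖ - (g (star x * x)).re| ≤ ‖star x * x‖ := by
    calc |‖star x * x‖ - (g (star x * x)).re|
        = |((‖star x * x‖ : ℂ) - g (star x * x)).re| := by simp
      _ ≤ ‖(‖star x * x‖ : ℂ) - g (star x * x)‖ := Complex.abs_re_le_norm _
      _ ≤ ‖star x * x‖ := hb1
  have := (abs_le.mp habs).2
  linarith

lemma aux_cs (ω : 𝔄 → ℂ) (hlin : IsLinearMap ℂ ω)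
    (hpos : ∀ a : 𝔄, ∃ r : ℝ, 0 ≤ r ∧ ω (star a * a) = (r : ℂ))
    {v : 𝔄} (hv : ω (star v * v) = 0) (u : 𝔄) : ω (star u * v) = 0 := by
  have expand : ∀ c : ℂ, ω (star (u + c • v) * (u + c • v))
      = ω (star u * u) + c * ω (star u * v) + (starRingEnd ℂ c) * ω (star v * u) := by
    intro c
    have hexp : star (u + c • v) * (u + c • v)
        = star u * u + c • (star u * v) + (starRingEnd ℂ c) • (star v * u)
          + (c * starRingEnd ℂ c) • (star v * v) := by
      simp only [star_add, star_smul, add_mul, mul_add, smul_add, smul_mul_assoc,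
        mul_smul_comm, smul_smul, Complex.star_def]
      abel
    rw [hexp, hlin.map_add, hlin.map_add, hlin.map_add, hlin.map_smul, hlin.map_smul,
      hlin.map_smul, hv]
    simp [smul_eq_mul]
  have h1 : ω (star u * v) + ω (star v * u) = 0 := by
    apply aux_param (ω (star u * u))
    intro t
    obtain ⟨r, hr0, hr⟩ := hpos (u + (t : ℂ) • v)
    rw [expand] at hr
    refine ⟨r, hr0, ?_⟩
    rw [← hr]
    simp [Complex.conj_ofReal]
    ring
  have h2 : Complex.I * (ω (star u * v) - ω (star v * u)) = 0 := by
    apply aux_param (ω (star u * u))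
    intro t
    obtain ⟨r, hr0, hr⟩ := hpos (u + ((t : ℂ) * Complex.I) • v)
    rw [expand] at hr
    refine ⟨r, hr0, ?_⟩
    rw [← hr]
    simp [Complex.conj_ofReal, map_mul, Complex.conj_I]
    ring
  have h2' : ω (star u * v) - ω (star v * u) = 0 :=
    (mul_eq_zero.mp h2).resolve_left Complex.I_ne_zero
  have : 2 * ω (star u * v) = 0 := by linear_combination h1 + h2'
  have h2ne : (2 : ℂ) ≠ 0 := two_ne_zero
  exact (mul_eq_zero.mp this).resolve_left h2ne

/-- A state on a unital C*-algebra `𝔄`: a continuous linear functional `ω : 𝔄 → ℂ`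
which is normalized (`ω 1 = 1`) and positive (`ω (a* a)` is a nonnegative real number). -/
def IsState (ω : 𝔄 → ℂ) : Prop :=
  Continuous ω ∧ IsLinearMap ℂ ω ∧ ω 1 = 1 ∧
    ∀ a : 𝔄, ∃ r : ℝ, 0 ≤ r ∧ ω (star a * a) = (r : ℂ)

/-- `ω` is an eigenstate of `A` with eigenvalue `l` if `ω (B * A) = l * ω B` for all `B`. -/
def IsEigenstate (ω : 𝔄 → ℂ) (A : 𝔄) (l : ℂ) : Prop :=
  ∀ B : 𝔄, ω (B * A) = l * ω B

/-- There exists an eigenstate of `A` with eigenvalue `l` iff `A - l•1` is not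
left-invertible. -/
theorem exists_eigenstate_iff_not_leftInvertible (A : 𝔄) (l : ℂ) :
    (∃ ω : 𝔄 → ℂ, IsState ω ∧ IsEigenstate ω A l) ↔
      ¬ ∃ B : 𝔄, B * (A - l • (1 : 𝔄)) = 1 := by
  constructor
  · rintro ⟨ω, ⟨hcont, hlin, hone, hpos⟩, heig⟩ ⟨B, hB⟩
    have hsub : B * (A - l • (1 : 𝔄)) = B * A - l • B := by
      rw [mul_sub, mul_smul_comm, mul_one]
    have hcontra : (1 : ℂ) = 0 := by
      calc (1 : ℂ) = ω 1 := hone.symm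
        _ = ω (B * A - l • B) := by rw [← hB, hsub]
        _ = ω (B * A) - l * ω B := by
            rw [sub_eq_add_neg, hlin.map_add, ← neg_smul, hlin.map_smul, smul_eq_mul]
            ring
        _ = 0 := by rw [heig B]; ring
    exact one_ne_zero hcontra
  · intro hninv
    rcases subsingleton_or_nontrivial 𝔄 with hsub | hnt
    · exact absurd ⟨0, Subsingleton.elim _ _⟩ hninv
    set C : 𝔄 := A - l • (1 : 𝔄) with hC
    set a : 𝔄 := star C * C with ha
    have hpsa : IsSelfAdjoint a := IsSelfAdjoint.star_mul_self C
    haveI : IsStarNormal a := hpsa.isStarNormal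
    have hnu : ¬ IsUnit a := by
      intro hu
      apply hninv
      refine ⟨(↑hu.unit⁻¹ : 𝔄) * star C, ?_⟩
      rw [mul_assoc, ← ha]
      exact hu.val_inv_mul
    set S := StarAlgebra.elemental ℂ a with hS
    haveI : IsClosed (S : Set 𝔄) := StarAlgebra.elemental.isClosed ℂ a
    set a' : S := ⟨a, StarAlgebra.elemental.self_mem ℂ a⟩ with ha'
    have hnu' : ¬ IsUnit a' := fun h => hnu (S.coe_isUnit.mpr h)
    obtain ⟨f, hf0⟩ := WeakDual.CharacterSpace.exists_apply_eq_zero hnu'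
    have hfb : ∀ y : S, ‖f y‖ ≤ ‖(y : 𝔄)‖ := by
      intro y
      have hmem : f y ∈ spectrum ℂ (y : 𝔄) := by
        rw [← S.spectrum_eq (a := y)]
        exact AlgHom.apply_mem_spectrum f y
      exact spectrum.norm_le_norm_of_mem hmem
    set p : Subspace ℂ 𝔄 := Subalgebra.toSubmodule S.toSubalgebra with hp
    have hmem : ∀ y : p, (y : 𝔄) ∈ S := fun y => y.2
    set f₀ : p →ₗ[ℂ] ℂ :=
      { toFun := fun y => f ⟨(y : 𝔄), hmem y⟩
        map_add' := fun y z => by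
          have h : (⟨((y + z : p) : 𝔄), hmem (y + z)⟩ : S)
              = ⟨(y : 𝔄), hmem y⟩ + ⟨(z : 𝔄), hmem z⟩ := Subtype.ext rfl
          show f ⟨((y + z : p) : 𝔄), hmem (y + z)⟩
              = f ⟨(y : 𝔄), hmem y⟩ + f ⟨(z : 𝔄), hmem z⟩
          rw [h, map_add]
        map_smul' := fun c y => by
          have h : (⟨((c • y : p) : 𝔄), hmem (c • y)⟩ : S)
              = c • ⟨(y : 𝔄), hmem y⟩ := Subtype.ext rfl
          show f ⟨((c • y : p) : 𝔄), hmem (c • y)⟩ = (RingHom.id ℂ) c • f ⟨(y : 𝔄), hmem y⟩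
          rw [h, map_smul]
          rfl } with hf₀
    have hf₀b : ∀ y : p, ‖f₀ y‖ ≤ 1 * ‖y‖ := fun y => by
      rw [one_mul]
      exact hfb ⟨(y : 𝔄), hmem y⟩
    obtain ⟨g, hg_ext, hg_norm⟩ := exists_extension_norm_eq p (f₀.mkContinuous 1 hf₀b)
    have hgle : ‖g‖ ≤ 1 := by
      rw [hg_norm]
      exact f₀.mkContinuous_norm_le zero_le_one hf₀b
    have h1p : (1 : 𝔄) ∈ p := (Subalgebra.mem_toSubmodule _).mpr (one_mem _)
    have hg1 : g 1 = 1 := by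
      calc g 1 = (f₀.mkContinuous 1 hf₀b) ⟨1, h1p⟩ := hg_ext ⟨1, h1p⟩
        _ = f ⟨(1 : 𝔄), hmem ⟨1, h1p⟩⟩ := rfl
        _ = f 1 := by norm_cast
        _ = 1 := map_one f
    have hap : a ∈ p := (Subalgebra.mem_toSubmodule _).mpr
      (StarAlgebra.elemental.self_mem ℂ a)
    have hga : g a = 0 := by
      calc g a = (f₀.mkContinuous 1 hf₀b) ⟨a, hap⟩ := hg_ext ⟨a, hap⟩
        _ = f ⟨a, hmem ⟨a, hap⟩⟩ := rfl
        _ = f a' := rfl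
        _ = 0 := hf0
    have hglin : IsLinearMap ℂ (⇑g) := ⟨fun x y => map_add g x y, fun c x => map_smul g c x⟩
    have hpos := aux_pos g hgle hg1
    refine ⟨⇑g, ⟨g.continuous, hglin, hg1, hpos⟩, ?_⟩
    intro B
    have hv : g (star C * C) = 0 := by rw [← ha]; exact hga
    have h0 : g (B * C) = 0 := by
      have := aux_cs (⇑g) hglin hpos hv (star B)
      rwa [star_star] at this
    have hBC : B * C = B * A - l • B := by rw [hC, mul_sub, mul_smul_comm, mul_one]
    rw [hBC, map_sub, map_smul] at h0
    have h0' : g (B * A) - l * g B = 0 := by simpa using h0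
    exact sub_eq_zero.mp h0'
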